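/- arXiv:2306.14703 — 2 statements merged into one kernel-verified Lean document; each statement's English description precedes it below -/
import Mathlib

section
/- Let (X_i)_{i∈ℤ} be a stationary process over a countable alphabet and define the context length I_k := min{i : log i ≥ H_∞(X₁^k | X_{k+1}^{k+i})}. Then log(I_k - 1) - H₀(X_i) ≤ H_∞(X₁^k | X_{k+1}^{k+I_k}) ≤ log I_k, where H₀(X_i) is the Hartley entropy of a single symbol. -/
open MeasureTheory ProbabilityTheory Filter Set
open scoped ENNReal NNReal

/-- The Hilberg exponent of a sequence of reals. -/
noncomputable def hilberg (a : ℕ → ℝ) : ℝ :=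
  Filter.limsup (fun k => max 0 (Real.log (a k) / Real.log k)) Filter.atTop

/-- The recurrence time `R⁽¹⁾_k`: the first position `i ≥ 1` such that
`X_{i+1}^{i+k} = X_1^k`, or `∞` if there is none. -/
noncomputable def recTime {Ω A : Type*} (X : ℤ → Ω → A) (k : ℕ) (ω : Ω) : ℕ∞ :=
  sInf {e : ℕ∞ | ∃ i : ℕ, e = (i : ℕ∞) ∧ 1 ≤ i ∧
    ∀ m : ℕ, m < k → X ((i : ℤ) + 1 + (m : ℤ)) ω = X (1 + (m : ℤ)) ω}

/-- The repetition time `R⁽²⁾_k`: the first position `i ≥ 1` such that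
`X_{i+1}^{i+k} = X_{j+1}^{j+k}` for some `0 ≤ j < i`, or `∞` if there is none. -/
noncomputable def repTime {Ω A : Type*} (X : ℤ → Ω → A) (k : ℕ) (ω : Ω) : ℕ∞ :=
  sInf {e : ℕ∞ | ∃ i : ℕ, e = (i : ℕ∞) ∧ 1 ≤ i ∧ ∃ j : ℕ, j < i ∧
    ∀ m : ℕ, m < k → X ((i : ℤ) + 1 + (m : ℤ)) ω = X ((j : ℤ) + 1 + (m : ℤ)) ω}

/-- The longest match length `L⁽¹⁾_n`. -/
noncomputable def matchLen {Ω A : Type*} (X : ℤ → Ω → A) (n : ℕ) (ω : Ω) : ℕ :=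
  sSup ({0} ∪ {k : ℕ | 1 ≤ k ∧ ∃ i : ℕ, 0 < i ∧ i + k ≤ n ∧
    ∀ m : ℕ, m < k → X ((i : ℤ) + 1 + (m : ℤ)) ω = X (1 + (m : ℤ)) ω})

/-- The maximal repetition length `L⁽²⁾_n`. -/
noncomputable def repLen {Ω A : Type*} (X : ℤ → Ω → A) (n : ℕ) (ω : Ω) : ℕ :=
  sSup ({0} ∪ {k : ℕ | 1 ≤ k ∧ ∃ i j : ℕ, j < i ∧ i + k ≤ n ∧
    ∀ m : ℕ, m < k → X ((i : ℤ) + 1 + (m : ℤ)) ω = X ((j : ℤ) + 1 + (m : ℤ)) ω})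

/-- `P(X_1^k)` evaluated at the realized block: the probability that a fresh
sample agrees with `ω` on coordinates `1,…,k`. -/
noncomputable def blockProb {Ω A : Type*} [MeasurableSpace Ω] (μ : Measure Ω)
    (X : ℤ → Ω → A) (k : ℕ) (ω : Ω) : ℝ :=
  (μ {ω' | ∀ m : ℕ, m < k → X (1 + (m : ℤ)) ω' = X (1 + (m : ℤ)) ω}).toReal

/-- The Shannon entropy `H₁(X_1^k) = E[-log P(X_1^k)]`. -/
noncomputable def shannonEnt {Ω A : Type*} [MeasurableSpace Ω] (μ : Measure Ω)
    (X : ℤ → Ω → A) (k : ℕ) : ℝ :=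
  ∫ ω, -Real.log (blockProb μ X k ω) ∂μ

/-- The σ-algebra generated by the future coordinates `X_j, X_{j+1}, …`. -/
def futureSigma {Ω A : Type*} [MeasurableSpace A] (X : ℤ → Ω → A) (j : ℤ) :
    MeasurableSpace Ω :=
  ⨆ i : {i : ℤ // j ≤ i}, MeasurableSpace.comap (X i) inferInstance

/-- `P(X_1^k | X_j^∞)` evaluated at the realized block: the conditional probability,
given the σ-algebra of the future `X_j^∞`, of the block `X_1^k`, evaluated at the
realized value of `X_1^k`. -/
noncomputable def condBlockProb {Ω A : Type*} [MeasurableSpace Ω] [MeasurableSpace A]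
    (μ : Measure Ω) (X : ℤ → Ω → A) (k : ℕ) (j : ℤ) (ω : Ω) : ℝ :=
  ∑' x : Fin k → A,
    ({ω'' | ∀ m : Fin k, X (1 + (m : ℤ)) ω'' = x m}.indicator (fun _ => (1 : ℝ)) ω) *
      (μ[({ω' | ∀ m : Fin k, X (1 + (m : ℤ)) ω' = x m}.indicator fun _ => (1 : ℝ)) |
        futureSigma X j]) ω

/-- The min-entropy `H_∞(X_1^k) = -log max_x P(X_1^k = x)`. -/
noncomputable def minEntropy {Ω A : Type*} [MeasurableSpace Ω] (μ : Measure Ω)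
    (X : ℤ → Ω → A) (k : ℕ) : ℝ :=
  -Real.log (⨆ x : Fin k → A, (μ {ω | ∀ m : Fin k, X (1 + (m : ℤ)) ω = x m}).toReal)

/-- The conditional min-entropy `H_∞(X_1^k | X_{k+1}^{k+i}) = -log E[max_x P(X_1^k = x | X_{k+1}^{k+i})]`,
written as `-log ∑_y max_x P(X_1^k = x, X_{k+1}^{k+i} = y)`. -/
noncomputable def condMinEntropy {Ω A : Type*} [MeasurableSpace Ω] (μ : Measure Ω)
    (X : ℤ → Ω → A) (k i : ℕ) : ℝ :=
  -Real.log (∑' y : Fin i → A, ⨆ x : Fin k → A,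
    (μ {ω | (∀ m : Fin k, X (1 + (m : ℤ)) ω = x m) ∧
      ∀ m : Fin i, X ((k : ℤ) + 1 + (m : ℤ)) ω = y m}).toReal)

/-- The context length `I_k := min {i ≥ 1 : log i ≥ H_∞(X_1^k | X_{k+1}^{k+i})}`. -/
noncomputable def contextLen {Ω A : Type*} [MeasurableSpace Ω] (μ : Measure Ω)
    (X : ℤ → Ω → A) (k : ℕ) : ℕ :=
  sInf {i : ℕ | 1 ≤ i ∧ condMinEntropy μ X k i ≤ Real.log i}

/-- The weighted conditional entropy
`H_•(X_1^k | X_{k+1}^∞) := -log ∑_{i=1}^∞ e^{-H_∞(X_1^k|X_{k+1}^{k+i})}/(i(i+1))`. -/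
noncomputable def weightedCondEntropy {Ω A : Type*} [MeasurableSpace Ω] (μ : Measure Ω)
    (X : ℤ → Ω → A) (k : ℕ) : ℝ :=
  -Real.log (∑' i : ℕ,
    Real.exp (-condMinEntropy μ X k (i + 1)) / ((i + 1) * (i + 2)))

/-- The median of a real random variable: `sup {r : P(X < r) ≤ 1/2}`. -/
noncomputable def medianOf {Ω : Type*} [MeasurableSpace Ω] (μ : Measure Ω) (f : Ω → ℝ) : ℝ :=
  sSup {r : ℝ | (μ {ω | f ω < r}).toReal ≤ 1 / 2}


section AuxCML

variable {Ω A : Type*} [MeasurableSpace Ω] [MeasurableSpace A] [MeasurableSingletonClass A]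
  [Countable A]

/-- The exponentiated conditional min-entropy, in `ℝ≥0∞`. -/
noncomputable def cmlQ (μ : Measure Ω) (X : ℤ → Ω → A) (k i : ℕ) : ℝ≥0∞ :=
  ∑' y : Fin i → A, ⨆ x : Fin k → A,
    μ {ω | (∀ m : Fin k, X (1 + (m : ℤ)) ω = x m) ∧
      ∀ m : Fin i, X ((k : ℤ) + 1 + (m : ℤ)) ω = y m}

variable (μ : Measure Ω) (X : ℤ → Ω → A) (k i : ℕ)

lemma cml_eq [IsFiniteMeasure μ] :
    condMinEntropy μ X k i = -Real.log (cmlQ μ X k i).toReal := by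
  unfold condMinEntropy cmlQ
  rw [ENNReal.tsum_toReal_eq fun y => ne_of_lt ((iSup_le fun x =>
    measure_mono (Set.subset_univ _)).trans_lt (measure_lt_top μ _))]
  have h : (∑' y : Fin i → A, ⨆ x : Fin k → A,
        (μ {ω | (∀ m : Fin k, X (1 + (m : ℤ)) ω = x m) ∧
          ∀ m : Fin i, X ((k : ℤ) + 1 + (m : ℤ)) ω = y m}).toReal)
      = ∑' y : Fin i → A, (⨆ x : Fin k → A,
        μ {ω | (∀ m : Fin k, X (1 + (m : ℤ)) ω = x m) ∧
          ∀ m : Fin i, X ((k : ℤ) + 1 + (m : ℤ)) ω = y m}).toReal :=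
    tsum_congr fun y => (ENNReal.toReal_iSup fun x => measure_ne_top μ _).symm
  rw [h]

lemma cmlQ_le_one [IsProbabilityMeasure μ] (hXmeas : ∀ i, Measurable (X i)) :
    cmlQ μ X k i ≤ 1 := by
  have hle : cmlQ μ X k i ≤ ∑' y : Fin i → A,
      μ {ω | ∀ m : Fin i, X ((k : ℤ) + 1 + (m : ℤ)) ω = y m} := by
    refine ENNReal.tsum_le_tsum fun y => iSup_le fun x => measure_mono fun ω hω => hω.2
  refine hle.trans ?_
  have hmeas : ∀ y : Fin i → A, MeasurableSet {ω | ∀ m : Fin i, X ((k : ℤ) + 1 + (m : ℤ)) ω = y m} := by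
    intro y
    have : {ω | ∀ m : Fin i, X ((k : ℤ) + 1 + (m : ℤ)) ω = y m}
        = ⋂ m : Fin i, (X ((k : ℤ) + 1 + (m : ℤ))) ⁻¹' {y m} := by
      ext ω; simp [Set.mem_iInter]
    rw [this]
    exact MeasurableSet.iInter fun m => (hXmeas _) (measurableSet_singleton _)
  have hdisj : Pairwise (Function.onFun Disjoint
      (fun y : Fin i → A => {ω | ∀ m : Fin i, X ((k : ℤ) + 1 + (m : ℤ)) ω = y m})) := by
    intro y y' hyy'
    refine Set.disjoint_left.2 fun ω hω hω' => hyy' ?_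
    funext m
    rw [← hω m, ← hω' m]
  rw [← measure_iUnion hdisj hmeas]
  exact measure_mono (Set.subset_univ _) |>.trans_eq measure_univ

lemma cmlQ_ge (hXmeas : ∀ i, Measurable (X i)) (x₀ : Fin k → A) :
    μ {ω | ∀ m : Fin k, X (1 + (m : ℤ)) ω = x₀ m} ≤ cmlQ μ X k i := by
  have hmeas : ∀ y : Fin i → A, MeasurableSet {ω | (∀ m : Fin k, X (1 + (m : ℤ)) ω = x₀ m) ∧
      ∀ m : Fin i, X ((k : ℤ) + 1 + (m : ℤ)) ω = y m} := by
    intro y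
    have : {ω | (∀ m : Fin k, X (1 + (m : ℤ)) ω = x₀ m) ∧
        ∀ m : Fin i, X ((k : ℤ) + 1 + (m : ℤ)) ω = y m}
        = (⋂ m : Fin k, (X (1 + (m : ℤ))) ⁻¹' {x₀ m}) ∩
          (⋂ m : Fin i, (X ((k : ℤ) + 1 + (m : ℤ))) ⁻¹' {y m}) := by
      ext ω; simp [Set.mem_iInter]
    rw [this]
    exact ((MeasurableSet.iInter fun m => (hXmeas _) (measurableSet_singleton _)).inter
      (MeasurableSet.iInter fun m => (hXmeas _) (measurableSet_singleton _)))
  have hdisj : Pairwise (Function.onFun Disjoint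
      (fun y : Fin i → A => {ω | (∀ m : Fin k, X (1 + (m : ℤ)) ω = x₀ m) ∧
        ∀ m : Fin i, X ((k : ℤ) + 1 + (m : ℤ)) ω = y m})) := by
    intro y y' hyy'
    refine Set.disjoint_left.2 fun ω hω hω' => hyy' ?_
    funext m
    rw [← hω.2 m, ← hω'.2 m]
  have hcover : {ω | ∀ m : Fin k, X (1 + (m : ℤ)) ω = x₀ m}
      = ⋃ y : Fin i → A, {ω | (∀ m : Fin k, X (1 + (m : ℤ)) ω = x₀ m) ∧
        ∀ m : Fin i, X ((k : ℤ) + 1 + (m : ℤ)) ω = y m} := by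
    ext ω
    constructor
    · intro hω
      exact Set.mem_iUnion.2 ⟨fun m => X ((k : ℤ) + 1 + (m : ℤ)) ω, hω, fun m => rfl⟩
    · rintro hω
      obtain ⟨y, hy, -⟩ := Set.mem_iUnion.1 hω
      exact hy
  calc μ {ω | ∀ m : Fin k, X (1 + (m : ℤ)) ω = x₀ m}
      = ∑' y : Fin i → A, μ {ω | (∀ m : Fin k, X (1 + (m : ℤ)) ω = x₀ m) ∧
          ∀ m : Fin i, X ((k : ℤ) + 1 + (m : ℤ)) ω = y m} := by
        rw [hcover, measure_iUnion hdisj hmeas]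
    _ ≤ cmlQ μ X k i := ENNReal.tsum_le_tsum fun y => le_iSup (fun x => μ _) x₀

lemma exists_block_pos [IsProbabilityMeasure μ] :
    ∃ x₀ : Fin k → A, μ {ω | ∀ m : Fin k, X (1 + (m : ℤ)) ω = x₀ m} ≠ 0 := by
  by_contra h
  push_neg at h
  have : μ (⋃ x : Fin k → A, {ω | ∀ m : Fin k, X (1 + (m : ℤ)) ω = x m}) = 0 :=
    measure_iUnion_null h
  have hcover : (⋃ x : Fin k → A, {ω | ∀ m : Fin k, X (1 + (m : ℤ)) ω = x m}) = Set.univ := by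
    ext ω
    simp only [Set.mem_iUnion, Set.mem_univ, iff_true]
    exact ⟨fun m => X (1 + (m : ℤ)) ω, fun m => rfl⟩
  rw [hcover, measure_univ] at this
  exact one_ne_zero this

lemma cmlQ_succ_le (hXmeas : ∀ i, Measurable (X i)) {S : Set A} (hS : S.Finite)
    (hzero : ∀ a ∉ S, μ {ω | X ((k : ℤ) + 1 + (i : ℤ)) ω = a} = 0) :
    cmlQ μ X k (i + 1) ≤ (hS.toFinset.card : ℝ≥0∞) * cmlQ μ X k i := by
  set g : (Fin (i+1) → A) → ℝ≥0∞ := fun y => ⨆ x : Fin k → A,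
    μ {ω | (∀ m : Fin k, X (1 + (m : ℤ)) ω = x m) ∧
      ∀ m : Fin (i+1), X ((k : ℤ) + 1 + (m : ℤ)) ω = y m} with hg
  have h1 : cmlQ μ X k (i+1) = ∑' (a : A), ∑' (y' : Fin i → A), g (Fin.snoc y' a) := by
    rw [show cmlQ μ X k (i+1) = ∑' y : Fin (i+1) → A, g y from rfl,
      ← (Fin.snocEquiv (fun _ => A)).tsum_eq g]
    rw [show (fun c : A × (Fin i → A) => g ((Fin.snocEquiv fun _ => A) c))
      = fun c : A × (Fin i → A) => g (Fin.snoc c.2 c.1) from rfl]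
    exact ENNReal.tsum_prod (f := fun (a : A) (y' : Fin i → A) => g (Fin.snoc y' a))
  rw [h1]
  have h2 : ∀ a : A, ∑' (y' : Fin i → A), g (Fin.snoc y' a)
      ≤ Set.indicator S (fun _ => cmlQ μ X k i) a := by
    intro a
    by_cases ha : a ∈ S
    · rw [Set.indicator_of_mem ha]
      refine ENNReal.tsum_le_tsum fun y' => iSup_mono fun x => measure_mono ?_
      rintro ω ⟨hx, hy⟩
      refine ⟨hx, fun m => ?_⟩
      have h := hy m.castSucc
      simpa using h
    · rw [Set.indicator_of_notMem ha]
      have hz : ∀ y' : Fin i → A, g (Fin.snoc y' a) = 0 := by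
        intro y'
        refine le_antisymm (iSup_le fun x => ?_) (zero_le)
        refine le_trans (measure_mono ?_) (le_of_eq (hzero a ha))
        rintro ω ⟨hx, hy⟩
        have h := hy (Fin.last i)
        simpa using h
      simp [hz]
  refine le_trans (ENNReal.tsum_le_tsum h2) ?_
  rw [tsum_eq_sum (s := hS.toFinset)
    (fun b hb => Set.indicator_of_notMem (by simpa using hb) _)]
  have h3 : ∀ b ∈ hS.toFinset, Set.indicator S (fun _ => cmlQ μ X k i) b = cmlQ μ X k i :=
    fun b hb => Set.indicator_of_mem (by simpa using hb) _
  rw [Finset.sum_congr rfl h3, Finset.sum_const, nsmul_eq_mul]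

lemma measure_single_const (hXmeas : ∀ i, Measurable (X i)) (T : Ω → Ω)
    (hT : MeasurePreserving T μ μ) (hshift : ∀ i ω, X i (T ω) = X (i + 1) ω)
    (a : A) (n n' : ℤ) : μ {ω | X n ω = a} = μ {ω | X n' ω = a} := by
  have step : ∀ m : ℤ, μ {ω | X (m + 1) ω = a} = μ {ω | X m ω = a} := by
    intro m
    have hpre : T ⁻¹' {ω | X m ω = a} = {ω | X (m + 1) ω = a} := by
      ext ω; simp [Set.mem_preimage, hshift]
    rw [← hpre]
    exact hT.measure_preimage ((hXmeas m) (measurableSet_singleton a)).nullMeasurableSet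
  have key : ∀ m : ℤ, μ {ω | X m ω = a} = μ {ω | X 0 ω = a} := by
    intro m
    induction m using Int.induction_on with
    | zero => rfl
    | succ p ih => rw [step p, ih]
    | pred p ih =>
      have h := step (-(p : ℤ) - 1)
      rw [show (-(p : ℤ) - 1 + 1) = -(p : ℤ) by ring] at h
      rw [← h]
      exact ih
  rw [key n, key n']

end AuxCML

/-- For a stationary process over a countable alphabet, the context length `I_k` satisfies
`log (I_k - 1) - H₀(X_j) ≤ H_∞(X₁^k | X_{k+1}^{k+I_k}) ≤ log I_k`, where `H₀(X_j)` is the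
Hartley entropy of a single symbol.  The left inequality is stated in the equivalent
exponentiated form `I_k - 1 ≤ e^{H_∞(X₁^k|X_{k+1}^{k+I_k})} · card {a : P(X_j = a) > 0}`,
which is also meaningful when the support of a single symbol is infinite. -/
theorem condMinEntropy_contextLen {Ω A : Type*} [MeasurableSpace Ω] [MeasurableSpace A]
    [MeasurableSingletonClass A] [Countable A]
    (μ : Measure Ω) [IsProbabilityMeasure μ] (X : ℤ → Ω → A) (hXmeas : ∀ i, Measurable (X i))
    (T : Ω → Ω) (hT : MeasurePreserving T μ μ) (hshift : ∀ i ω, X i (T ω) = X (i + 1) ω)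
    (k : ℕ) (hk : 1 ≤ k) (j : ℤ) :
    (((contextLen μ X k - 1 : ℕ) : ℝ≥0∞)
      ≤ ENNReal.ofReal (Real.exp (condMinEntropy μ X k (contextLen μ X k)))
          * (({a : A | μ {ω | X j ω = a} ≠ 0}.encard : ℕ∞) : ℝ≥0∞)) ∧
    condMinEntropy μ X k (contextLen μ X k) ≤ Real.log (contextLen μ X k) := by
  obtain ⟨x₀, hx₀⟩ := exists_block_pos μ X k
  have hp₀top : μ {ω | ∀ m : Fin k, X (1 + (m : ℤ)) ω = x₀ m} ≠ ⊤ := measure_ne_top μ _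
  have hp₀r : 0 < (μ {ω | ∀ m : Fin k, X (1 + (m : ℤ)) ω = x₀ m}).toReal :=
    ENNReal.toReal_pos hx₀ hp₀top
  have hQtop : ∀ i, cmlQ μ X k i ≠ ⊤ := fun i =>
    ne_of_lt ((cmlQ_le_one μ X k i hXmeas).trans_lt (by norm_num))
  have hQpos : ∀ i, 0 < (cmlQ μ X k i).toReal := fun i =>
    lt_of_lt_of_le hp₀r (ENNReal.toReal_mono (hQtop i) (cmlQ_ge μ X k i hXmeas x₀))
  have hne : {i : ℕ | 1 ≤ i ∧ condMinEntropy μ X k i ≤ Real.log i}.Nonempty := by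
    set C := -Real.log (μ {ω | ∀ m : Fin k, X (1 + (m : ℤ)) ω = x₀ m}).toReal with hC
    refine ⟨max 1 ⌈Real.exp C⌉₊, le_max_left _ _, ?_⟩
    rw [cml_eq]
    have h1 : -Real.log (cmlQ μ X k (max 1 ⌈Real.exp C⌉₊)).toReal ≤ C := by
      rw [hC]
      exact neg_le_neg (Real.log_le_log hp₀r
        (ENNReal.toReal_mono (hQtop _) (cmlQ_ge μ X k _ hXmeas x₀)))
    refine h1.trans ?_
    have h2 : Real.exp C ≤ ((max 1 ⌈Real.exp C⌉₊ : ℕ) : ℝ) := by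
      refine (Nat.le_ceil _).trans ?_
      exact_mod_cast Nat.cast_le.2 (le_max_right 1 ⌈Real.exp C⌉₊)
    calc C = Real.log (Real.exp C) := (Real.log_exp C).symm
      _ ≤ Real.log _ := Real.log_le_log (Real.exp_pos C) h2
  have hmem : 1 ≤ contextLen μ X k ∧
      condMinEntropy μ X k (contextLen μ X k) ≤ Real.log (contextLen μ X k) :=
    Nat.sInf_mem hne
  refine ⟨?_, hmem.2⟩
  by_cases hS : {a : A | μ {ω | X j ω = a} ≠ 0}.Finite
  · rcases eq_or_lt_of_le hmem.1 with h1 | h2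
    · simp [← h1]
    · -- 2 ≤ contextLen
      set I := contextLen μ X k with hIdef
      have hI1 : 1 ≤ I - 1 := by omega
      have hnotmem : (I - 1) ∉ {i : ℕ | 1 ≤ i ∧ condMinEntropy μ X k i ≤ Real.log i} :=
        Nat.notMem_of_lt_sInf (show I - 1 < sInf _ from Nat.sub_lt (by omega) one_pos)
      have hlog : Real.log ((I - 1 : ℕ) : ℝ) < condMinEntropy μ X k (I - 1) := by
        by_contra hcon
        exact hnotmem ⟨hI1, le_of_not_gt hcon⟩
      set r := (cmlQ μ X k (I - 1)).toReal with hr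
      set q := (cmlQ μ X k I).toReal with hqdef
      have hrpos : 0 < r := hQpos _
      have hqpos : 0 < q := hQpos _
      have hIr : ((I - 1 : ℕ) : ℝ) * r < 1 := by
        rw [cml_eq] at hlog
        have hprod : Real.log (((I - 1 : ℕ) : ℝ) * r) < 0 := by
          rw [Real.log_mul (by positivity) hrpos.ne']
          linarith
        have hpos : (0 : ℝ) < ((I - 1 : ℕ) : ℝ) * r := by positivity
        exact (Real.log_neg_iff hpos).1 hprod
      -- key inequality
      set n := hS.toFinset.card with hn
      have hzero : ∀ a ∉ {a : A | μ {ω | X j ω = a} ≠ 0},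
          μ {ω | X ((k : ℤ) + 1 + ((I - 1 : ℕ) : ℤ)) ω = a} = 0 := by
        intro a ha
        rw [measure_single_const μ X hXmeas T hT hshift a _ j]
        simpa using ha
      have hkey : cmlQ μ X k ((I - 1) + 1) ≤ (n : ℝ≥0∞) * cmlQ μ X k (I - 1) :=
        cmlQ_succ_le μ X k (I - 1) hXmeas hS hzero
      rw [show I - 1 + 1 = I from by omega] at hkey
      have hq : q ≤ (n : ℝ) * r := by
        have := ENNReal.toReal_mono
          (ENNReal.mul_ne_top (ENNReal.natCast_ne_top n) (hQtop (I - 1))) hkey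
        rwa [ENNReal.toReal_mul, ENNReal.toReal_natCast n] at this
      have hfinal : ((I - 1 : ℕ) : ℝ) ≤ q⁻¹ * (n : ℝ) := by
        rw [inv_mul_eq_div, le_div_iff₀ hqpos]
        nlinarith [hrpos.le, hqpos.le, Nat.cast_nonneg (α := ℝ) n,
          Nat.cast_nonneg (α := ℝ) (I - 1)]
      calc ((I - 1 : ℕ) : ℝ≥0∞) = ENNReal.ofReal ((I - 1 : ℕ) : ℝ) :=
            (ENNReal.ofReal_natCast _).symm
        _ ≤ ENNReal.ofReal (q⁻¹ * (n : ℝ)) := ENNReal.ofReal_le_ofReal hfinal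
        _ = ENNReal.ofReal q⁻¹ * ENNReal.ofReal ((n : ℝ)) :=
            ENNReal.ofReal_mul (inv_nonneg.2 hqpos.le)
        _ = ENNReal.ofReal (Real.exp (condMinEntropy μ X k I)) *
            (({a : A | μ {ω | X j ω = a} ≠ 0}.encard : ℕ∞) : ℝ≥0∞) := by
            rw [cml_eq, Real.exp_neg, Real.exp_log hqpos,
              hS.encard_eq_coe_toFinset_card, ENat.toENNReal_coe, ENNReal.ofReal_natCast]
  · rw [Set.Infinite.encard_eq hS, ENat.toENNReal_top,
      ENNReal.mul_top (ENNReal.ofReal_pos.2 (Real.exp_pos _)).ne']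
    exact le_top
end

section
/- Let (X_i)_{i∈ℤ} be a stationary process over a countable alphabet. For every k ≥ 1 and i ≥ 1, the conditional min-entropies satisfy 0 ≤ H_∞(X₁^k | X_{k+1}^{k+i-1}) - H_∞(X₁^k | X_{k+1}^{k+i}) ≤ H₀(X_j), where H₀(X_j) is the Hartley entropy of a single symbol. -/
open MeasureTheory ProbabilityTheory Filter Set
open scoped ENNReal NNReal

section AuxBlk

variable {Ω A : Type*} [MeasurableSpace Ω] [MeasurableSpace A]
  [MeasurableSingletonClass A] [Countable A]

/-- The block event appearing in `condMinEntropy`. -/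
def blkSet (X : ℤ → Ω → A) (k n : ℕ) (x : Fin k → A) (y : Fin n → A) : Set Ω :=
  {ω | (∀ m : Fin k, X (1 + (m : ℤ)) ω = x m) ∧ ∀ m : Fin n, X ((k : ℤ) + 1 + (m : ℤ)) ω = y m}

lemma blkSet_measurable {X : ℤ → Ω → A} (hX : ∀ i, Measurable (X i)) (k n : ℕ)
    (x : Fin k → A) (y : Fin n → A) : MeasurableSet (blkSet X k n x y) := by
  have h : blkSet X k n x y =
      (⋂ m : Fin k, X (1 + (m : ℤ)) ⁻¹' {x m}) ∩
      (⋂ m : Fin n, X ((k : ℤ) + 1 + (m : ℤ)) ⁻¹' {y m}) := by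
    ext ω; simp [blkSet, Set.mem_iInter, Set.mem_preimage]
  rw [h]
  exact (MeasurableSet.iInter fun m => (hX _) (measurableSet_singleton _)).inter
    (MeasurableSet.iInter fun m => (hX _) (measurableSet_singleton _))

lemma blkSet_snoc (X : ℤ → Ω → A) (k n : ℕ) (x : Fin k → A) (y : Fin n → A) (a : A) :
    blkSet X k (n + 1) x (Fin.snoc y a) =
      blkSet X k n x y ∩ {ω | X ((k : ℤ) + 1 + (n : ℤ)) ω = a} := by
  ext ω
  simp only [blkSet, Set.mem_inter_iff, Set.mem_setOf_eq]
  constructor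
  · rintro ⟨h1, h2⟩
    refine ⟨⟨h1, fun m => ?_⟩, ?_⟩
    · have := h2 m.castSucc
      simpa [Fin.snoc_castSucc, Fin.coe_castSucc] using this
    · have := h2 (Fin.last n)
      simpa [Fin.snoc_last, Fin.val_last] using this
  · rintro ⟨⟨h1, h2⟩, h3⟩
    refine ⟨h1, fun m => ?_⟩
    refine Fin.lastCases ?_ (fun m' => ?_) m
    · simpa [Fin.snoc_last, Fin.val_last] using h3
    · simpa [Fin.snoc_castSucc, Fin.coe_castSucc] using h2 m'

lemma measure_blkSet_tsum (μ : Measure Ω) {X : ℤ → Ω → A} (hX : ∀ i, Measurable (X i))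
    (k n : ℕ) (x : Fin k → A) (y : Fin n → A) :
    μ (blkSet X k n x y) = ∑' a : A, μ (blkSet X k (n + 1) x (Fin.snoc y a)) := by
  have hU : (⋃ a : A, blkSet X k (n + 1) x (Fin.snoc y a)) = blkSet X k n x y := by
    ext ω
    simp only [Set.mem_iUnion, blkSet_snoc, Set.mem_inter_iff, Set.mem_setOf_eq]
    constructor
    · rintro ⟨a, h, _⟩; exact h
    · intro h; exact ⟨X ((k : ℤ) + 1 + (n : ℤ)) ω, h, rfl⟩
  rw [← hU, measure_iUnion ?_ fun a => blkSet_measurable hX _ _ _ _]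
  intro a b hab
  simp only [Function.onFun, blkSet_snoc]
  apply Set.disjoint_left.mpr
  rintro ω ⟨_, h1⟩ ⟨_, h2⟩
  exact hab (h1.symm.trans h2)

lemma tsum_blkSet_eq_one (μ : Measure Ω) [IsProbabilityMeasure μ] {X : ℤ → Ω → A}
    (hX : ∀ i, Measurable (X i)) (k n : ℕ) :
    ∑' p : (Fin k → A) × (Fin n → A), μ (blkSet X k n p.1 p.2) = 1 := by
  rw [← measure_iUnion ?_ fun p => blkSet_measurable hX _ _ _ _]
  · have h : (⋃ p : (Fin k → A) × (Fin n → A), blkSet X k n p.1 p.2) = Set.univ := by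
      ext ω
      simp only [Set.mem_iUnion, Set.mem_univ, iff_true]
      exact ⟨(fun m => X (1 + (m : ℤ)) ω, fun m => X ((k : ℤ) + 1 + (m : ℤ)) ω),
        fun m => rfl, fun m => rfl⟩
    rw [h, measure_univ]
  · rintro ⟨x, y⟩ ⟨x', y'⟩ hne
    apply Set.disjoint_left.mpr
    rintro ω ⟨h1, h2⟩ ⟨h3, h4⟩
    apply hne
    have hx : x = x' := funext fun m => (h1 m).symm.trans (h3 m)
    have hy : y = y' := funext fun m => (h2 m).symm.trans (h4 m)
    simp [hx, hy]

/-- The exponentiated conditional min-entropy, in `ℝ≥0∞`. -/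
noncomputable def blkSum (μ : Measure Ω) (X : ℤ → Ω → A) (k n : ℕ) : ℝ≥0∞ :=
  ∑' y : Fin n → A, ⨆ x : Fin k → A, μ (blkSet X k n x y)

lemma blkSum_le_one (μ : Measure Ω) [IsProbabilityMeasure μ] {X : ℤ → Ω → A}
    (hX : ∀ i, Measurable (X i)) (k n : ℕ) : blkSum μ X k n ≤ 1 := by
  calc blkSum μ X k n ≤ ∑' (y : Fin n → A) (x : Fin k → A), μ (blkSet X k n x y) :=
        ENNReal.tsum_le_tsum fun y => iSup_le fun x => ENNReal.le_tsum x
    _ = ∑' (x : Fin k → A) (y : Fin n → A), μ (blkSet X k n x y) := ENNReal.tsum_comm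
    _ = ∑' p : (Fin k → A) × (Fin n → A), μ (blkSet X k n p.1 p.2) :=
        (ENNReal.tsum_prod).symm
    _ = 1 := tsum_blkSet_eq_one μ hX k n

lemma blkSum_ne_zero (μ : Measure Ω) [IsProbabilityMeasure μ] {X : ℤ → Ω → A}
    (hX : ∀ i, Measurable (X i)) (k n : ℕ) : blkSum μ X k n ≠ 0 := by
  have h1 := tsum_blkSet_eq_one μ hX k n
  have : ∃ p : (Fin k → A) × (Fin n → A), μ (blkSet X k n p.1 p.2) ≠ 0 := by
    by_contra h
    push_neg at h
    rw [tsum_congr h] at h1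
    simp at h1
  obtain ⟨⟨x₀, y₀⟩, hp⟩ := this
  intro h0
  apply hp
  have h2 : (⨆ x : Fin k → A, μ (blkSet X k n x y₀)) ≤ blkSum μ X k n :=
    ENNReal.le_tsum y₀
  have h3 : μ (blkSet X k n x₀ y₀) ≤ blkSum μ X k n :=
    le_trans (le_iSup (fun x => μ (blkSet X k n x y₀)) x₀) h2
  rw [h0] at h3
  exact le_antisymm h3 zero_le

/-- Stationarity: the law of a single coordinate does not depend on the index. -/
lemma measure_coord_const (μ : Measure Ω) {X : ℤ → Ω → A} (hX : ∀ i, Measurable (X i))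
    {T : Ω → Ω} (hT : MeasurePreserving T μ μ) (hshift : ∀ i ω, X i (T ω) = X (i + 1) ω)
    (a : A) (i j : ℤ) : μ {ω | X i ω = a} = μ {ω | X j ω = a} := by
  have key : ∀ t : ℤ, μ {ω | X (t + 1) ω = a} = μ {ω | X t ω = a} := by
    intro t
    have hpre : T ⁻¹' {ω | X t ω = a} = {ω | X (t + 1) ω = a} := by
      ext ω; simp [Set.mem_preimage, hshift]
    rw [← hpre]
    exact hT.measure_preimage ((hX t) (measurableSet_singleton a)).nullMeasurableSet
  have base : ∀ t : ℤ, μ {ω | X t ω = a} = μ {ω | X 0 ω = a} := by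
    intro t
    induction t using Int.induction_on with
    | zero => rfl
    | succ m ih => rw [key m, ih]
    | pred m ih =>
      have h := key (-(m : ℤ) - 1)
      rw [show (-(m : ℤ) - 1 + 1) = -(m : ℤ) by ring] at h
      rw [← h]; exact ih
  rw [base i, base j]

/-- The snoc equivalence. -/
def snocEquiv (A : Type*) (n : ℕ) : (Fin n → A) × A ≃ (Fin (n + 1) → A) where
  toFun p := Fin.snoc p.1 p.2
  invFun y := (fun m => y m.castSucc, y (Fin.last n))
  left_inv p := by
    refine Prod.ext ?_ ?_
    · funext m; simp
    · simp
  right_inv y := by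
    funext m
    refine Fin.lastCases ?_ (fun m' => ?_) m <;> simp

lemma blkSum_succ (μ : Measure Ω) (X : ℤ → Ω → A) (k n : ℕ) :
    blkSum μ X k (n + 1) =
      ∑' (y : Fin n → A) (a : A), ⨆ x : Fin k → A, μ (blkSet X k (n + 1) x (Fin.snoc y a)) := by
  rw [blkSum, ← (snocEquiv A n).tsum_eq]
  exact ENNReal.tsum_prod
    (f := fun (y : Fin n → A) (a : A) => ⨆ x : Fin k → A, μ (blkSet X k (n + 1) x (Fin.snoc y a)))

lemma blkSum_mono (μ : Measure Ω) {X : ℤ → Ω → A} (hX : ∀ i, Measurable (X i)) (k n : ℕ) :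
    blkSum μ X k n ≤ blkSum μ X k (n + 1) := by
  rw [blkSum_succ]
  refine ENNReal.tsum_le_tsum fun y => ?_
  refine iSup_le fun x => ?_
  rw [measure_blkSet_tsum μ hX k n x y]
  exact ENNReal.tsum_le_tsum fun a =>
    le_iSup (fun x => μ (blkSet X k (n + 1) x (Fin.snoc y a))) x

lemma blkSum_succ_le (μ : Measure Ω) {X : ℤ → Ω → A} (hX : ∀ i, Measurable (X i))
    {T : Ω → Ω} (hT : MeasurePreserving T μ μ) (hshift : ∀ i ω, X i (T ω) = X (i + 1) ω)
    (k n : ℕ) (j : ℤ) :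
    blkSum μ X k (n + 1) ≤
      (({a : A | μ {ω | X j ω = a} ≠ 0}.encard : ℕ∞) : ℝ≥0∞) * blkSum μ X k n := by
  set s : Set A := {a : A | μ {ω | X j ω = a} ≠ 0} with hs
  rw [blkSum_succ, blkSum, ← ENNReal.tsum_mul_left]
  refine ENNReal.tsum_le_tsum fun y => ?_
  set c : ℝ≥0∞ := ⨆ x : Fin k → A, μ (blkSet X k n x y) with hc
  calc (∑' a : A, ⨆ x : Fin k → A, μ (blkSet X k (n + 1) x (Fin.snoc y a)))
      ≤ ∑' a : A, s.indicator (fun _ => c) a := by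
        refine ENNReal.tsum_le_tsum fun a => ?_
        by_cases ha : a ∈ s
        · rw [Set.indicator_of_mem ha]
          refine iSup_le fun x => ?_
          refine le_trans (measure_mono ?_) (le_iSup (fun x => μ (blkSet X k n x y)) x)
          rw [blkSet_snoc]
          exact Set.inter_subset_left
        · rw [Set.indicator_of_notMem ha]
          refine iSup_le fun x => ?_
          have hsub : blkSet X k (n + 1) x (Fin.snoc y a) ⊆
              {ω | X ((k : ℤ) + 1 + (n : ℤ)) ω = a} := by
            rw [blkSet_snoc]; exact Set.inter_subset_right
          have h0 : μ {ω | X ((k : ℤ) + 1 + (n : ℤ)) ω = a} = 0 := by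
            rw [measure_coord_const μ hX hT hshift a ((k : ℤ) + 1 + (n : ℤ)) j]
            simpa [hs] using ha
          exact le_trans (measure_mono hsub) (le_of_eq h0)
    _ = ∑' a : s, c := (tsum_subtype s (fun _ => c)).symm
    _ = (s.encard : ℝ≥0∞) * c := ENNReal.tsum_set_const s c

lemma condMinEntropy_eq_blkSum (μ : Measure Ω) [IsProbabilityMeasure μ] (X : ℤ → Ω → A)
    (k n : ℕ) : condMinEntropy μ X k n = -Real.log (blkSum μ X k n).toReal := by
  unfold condMinEntropy blkSum
  congr 2
  have hne : ∀ y : Fin n → A, (⨆ x : Fin k → A, μ (blkSet X k n x y)) ≠ ∞ :=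
    fun y => ((iSup_le fun x => prob_le_one).trans_lt ENNReal.one_lt_top).ne
  rw [ENNReal.tsum_toReal_eq hne]
  exact tsum_congr fun y => (ENNReal.toReal_iSup fun x => measure_ne_top μ _).symm

end AuxBlk

/-- For a stationary process over a countable alphabet, for `k, i ≥ 1`,
`0 ≤ H_∞(X₁^k | X_{k+1}^{k+i-1}) - H_∞(X₁^k | X_{k+1}^{k+i}) ≤ H₀(X_j)`, where `H₀(X_j)`
is the Hartley entropy of a single symbol.  The right inequality is stated in the
equivalent exponentiated form
`e^{H_∞(X₁^k|X_{k+1}^{k+i-1})} ≤ e^{H_∞(X₁^k|X_{k+1}^{k+i})} · card {a : P(X_j = a) > 0}`,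
which is also meaningful when the support of a single symbol is infinite. -/
theorem condMinEntropy_succ_diff {Ω A : Type*} [MeasurableSpace Ω] [MeasurableSpace A]
    [MeasurableSingletonClass A] [Countable A]
    (μ : Measure Ω) [IsProbabilityMeasure μ] (X : ℤ → Ω → A) (hXmeas : ∀ i, Measurable (X i))
    (T : Ω → Ω) (hT : MeasurePreserving T μ μ) (hshift : ∀ i ω, X i (T ω) = X (i + 1) ω)
    (k i : ℕ) (hk : 1 ≤ k) (hi : 1 ≤ i) (j : ℤ) :
    condMinEntropy μ X k i ≤ condMinEntropy μ X k (i - 1) ∧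
    ENNReal.ofReal (Real.exp (condMinEntropy μ X k (i - 1)))
      ≤ ENNReal.ofReal (Real.exp (condMinEntropy μ X k i))
          * (({a : A | μ {ω | X j ω = a} ≠ 0}.encard : ℕ∞) : ℝ≥0∞) := by
  obtain ⟨n, rfl⟩ : ∃ n, i = n + 1 := ⟨i - 1, (Nat.succ_pred_eq_of_pos hi).symm⟩
  simp only [Nat.add_sub_cancel]
  set Sn := blkSum μ X k n with hSn
  set Sn1 := blkSum μ X k (n + 1) with hSn1
  have h0 : Sn ≠ 0 := blkSum_ne_zero μ hXmeas k n
  have h0' : Sn1 ≠ 0 := blkSum_ne_zero μ hXmeas k (n + 1)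
  have ht : Sn ≠ ∞ := ((blkSum_le_one μ hXmeas k n).trans_lt ENNReal.one_lt_top).ne
  have ht' : Sn1 ≠ ∞ := ((blkSum_le_one μ hXmeas k (n + 1)).trans_lt ENNReal.one_lt_top).ne
  have hmono : Sn ≤ Sn1 := blkSum_mono μ hXmeas k n
  have hcard : Sn1 ≤ (({a : A | μ {ω | X j ω = a} ≠ 0}.encard : ℕ∞) : ℝ≥0∞) * Sn :=
    blkSum_succ_le μ hXmeas hT hshift k n j
  have hpos : 0 < Sn.toReal := ENNReal.toReal_pos h0 ht
  have hpos' : 0 < Sn1.toReal := ENNReal.toReal_pos h0' ht'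
  rw [condMinEntropy_eq_blkSum μ X k n, condMinEntropy_eq_blkSum μ X k (n + 1), ← hSn, ← hSn1]
  constructor
  · exact neg_le_neg (Real.log_le_log hpos ((ENNReal.toReal_le_toReal ht ht').mpr hmono))
  · have hexp : ∀ z : ℝ≥0∞, z ≠ 0 → z ≠ ∞ →
        Real.exp (-Real.log z.toReal) = (z⁻¹).toReal := by
      intro z hz hz'
      rw [Real.exp_neg, Real.exp_log (ENNReal.toReal_pos hz hz'), ENNReal.toReal_inv]
    rw [hexp Sn h0 ht, hexp Sn1 h0' ht',
      ENNReal.ofReal_toReal (by simp [h0]), ENNReal.ofReal_toReal (by simp [h0'])]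
    set N := (({a : A | μ {ω | X j ω = a} ≠ 0}.encard : ℕ∞) : ℝ≥0∞) with hN
    calc Sn⁻¹ = (Sn1⁻¹ * Sn1) * Sn⁻¹ := by rw [ENNReal.inv_mul_cancel h0' ht', one_mul]
      _ = Sn1⁻¹ * (Sn1 * Sn⁻¹) := by ring
      _ ≤ Sn1⁻¹ * ((N * Sn) * Sn⁻¹) :=
          mul_le_mul_right (mul_le_mul_left hcard _) _
      _ = Sn1⁻¹ * (N * (Sn * Sn⁻¹)) := by ring
      _ = Sn1⁻¹ * N := by rw [ENNReal.mul_inv_cancel h0 ht, mul_one]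
end
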